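/- Let ⟨Tᵢ : i ∈ ℕ⟩ be a sequence of trees in 2^{<ω} such that the measure of the path set of Tᵢ is at least qᵢ, where each qᵢ ∈ (0,1] and ∏ᵢ qᵢ ≥ r > 0. Let S be the interleaving tree: σ ∈ S iff for every i, the subsequence of σ along the i-th column (positions coding pairs ⟨i,·⟩) is in Tᵢ. Then the measure of the path set of S equals ∏ᵢ μ([Tᵢ]) ≥ r > 0, and every infinite path B of S continuously determines a sequence ⟨Bᵢ⟩ where each Bᵢ is an infinite path through Tᵢ. -/

import Mathlib

open MeasureTheory

/-- The binary-digit expansion map `[0,1) → 2^ω`. -/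
noncomputable def binDigits (x : ℝ) : ℕ → Bool := fun n => decide (⌊x * 2 ^ (n + 1)⌋ % 2 = 1)

/-- The uniform (fair-coin product) measure on Cantor space, realized as the
pushforward of Lebesgue measure on `[0,1)` under binary expansion. -/
noncomputable def cantorMeasure : Measure (ℕ → Bool) :=
  (volume.restrict (Set.Ico (0 : ℝ) 1)).map binDigits

/-- A tree is a prefix-closed set of finite binary strings. -/
def IsTree (T : Set (List Bool)) : Prop := ∀ l ∈ T, ∀ l', l' <+: l → l' ∈ T

/-- The set of infinite paths through a tree. -/
def pathSet (T : Set (List Bool)) : Set (ℕ → Bool) :=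
  {X | ∀ n, (List.range n).map X ∈ T}

/-- The subsequence of a finite string `σ` along the `i`-th column: the values of
`σ` at the positions coding pairs `⟨i, ·⟩` (in increasing order). -/
def colPrefix (i : ℕ) (σ : List Bool) : List Bool :=
  ((List.range σ.length).filter fun p => p.unpair.1 = i).map fun p => σ.getD p false

/-- The interleaving tree of a sequence of trees: `σ ∈ S` iff for every `i`, the
subsequence of `σ` along the `i`-th column is in `Tᵢ`. -/
def interleaveTree (T : ℕ → Set (List Bool)) : Set (List Bool) :=
  {σ | ∀ i, colPrefix i σ ∈ T i}


section Aux
open Filter Topology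

def colCount (i n : ℕ) : ℕ := ((List.range n).filter fun p => p.unpair.1 = i).length

theorem pair_strictMono (i : ℕ) : StrictMono (Nat.pair i) := fun _ _ h => Nat.pair_lt_pair_right i h

theorem colCount_eq_card (i n : ℕ) :
    colCount i n = ((Finset.range n).filter fun p => p.unpair.1 = i).card := rfl

/-- L0 -/

theorem colCount_pair (i x : ℕ) : colCount i (Nat.pair i x) = x := by
  classical
  rw [colCount_eq_card]
  have h : ((Finset.range (Nat.pair i x)).filter fun p => p.unpair.1 = i)
      = (Finset.range x).image (Nat.pair i) := by
    ext p
    simp only [Finset.mem_filter, Finset.mem_range, Finset.mem_image]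
    constructor
    · rintro ⟨hlt, hfst⟩
      refine ⟨p.unpair.2, ?_, by rw [← hfst]; exact Nat.pair_unpair p⟩
      have hp : Nat.pair i p.unpair.2 = p := by rw [← hfst]; exact Nat.pair_unpair p
      exact (pair_strictMono i).lt_iff_lt.mp (by rw [hp]; exact hlt)
    · rintro ⟨y, hy, rfl⟩
      exact ⟨pair_strictMono i hy, by simp [Nat.unpair_pair]⟩
  rw [h, Finset.card_image_of_injective _ (pair_strictMono i).injective, Finset.card_range]

/-- L1 -/

theorem filter_range_eq (i n : ℕ) :
    ((List.range n).filter fun p => p.unpair.1 = i) = (List.range (colCount i n)).map (Nat.pair i) := by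
  induction n with
  | zero => simp [colCount]
  | succ n ih =>
    have hcc : colCount i (n+1) = colCount i n + ((List.filter (fun p => decide (p.unpair.1 = i)) [n]).length) := by
      rw [colCount, List.range_succ, List.filter_append, List.length_append]; rfl
    rw [List.range_succ, List.filter_append, ih]
    by_cases h : n.unpair.1 = i
    · have hn : Nat.pair i n.unpair.2 = n := by rw [← h]; exact Nat.pair_unpair n
      have hy : colCount i n = n.unpair.2 := by conv_lhs => rw [← hn, colCount_pair]
      rw [hcc]
      simp only [h, List.filter_cons, decide_eq_true_eq, if_pos rfl]
      simp [hy, List.range_succ, hn]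
    · rw [hcc]
      simp [h]

/-- M: `x < colCount i n ↔ pair i x < n` -/

theorem lt_colCount_iff (i n x : ℕ) : x < colCount i n ↔ Nat.pair i x < n := by
  constructor
  · intro hx
    have : Nat.pair i x ∈ (List.range n).filter fun p => p.unpair.1 = i := by
      rw [filter_range_eq]
      exact List.mem_map_of_mem (List.mem_range.mpr hx)
    exact List.mem_range.mp (List.mem_of_mem_filter this)
  · intro hx
    have : Nat.pair i x ∈ (List.range n).filter fun p => p.unpair.1 = i := by
      rw [List.mem_filter]
      exact ⟨List.mem_range.mpr hx, by simp [Nat.unpair_pair]⟩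
    rw [filter_range_eq, List.mem_map] at this
    obtain ⟨y, hy, hmy⟩ := this
    rwa [← (pair_strictMono i).injective hmy, ← List.mem_range]

theorem colPrefix_eq (i : ℕ) (σ : List Bool) :
    colPrefix i σ = (List.range (colCount i σ.length)).map fun x => σ.getD (Nat.pair i x) false := by
  rw [colPrefix, filter_range_eq, List.map_map]; rfl

theorem length_colPrefix (i : ℕ) (σ : List Bool) :
    (colPrefix i σ).length = colCount i σ.length := by
  rw [colPrefix_eq, List.length_map, List.length_range]

theorem colCount_mono (i : ℕ) : Monotone (colCount i) := by
  intro a b hab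
  by_contra h
  push_neg at h
  have := (lt_colCount_iff i a (colCount i b)).mp h
  have h2 := (lt_colCount_iff i b (colCount i b)).mpr (lt_of_lt_of_le this hab)
  exact lt_irrefl _ h2

theorem colCount_eq_zero (i n : ℕ) (h : n ≤ i) : colCount i n = 0 := by
  by_contra h0
  have := (lt_colCount_iff i n 0).mp (Nat.pos_of_ne_zero h0)
  exact absurd ((Nat.left_le_pair i 0).trans_lt this) (not_lt.mpr h)

theorem colPrefix_mono {σ' σ : List Bool} (h : σ' <+: σ) (i : ℕ) :
    colPrefix i σ' <+: colPrefix i σ := by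
  rw [colPrefix_eq, colPrefix_eq, List.prefix_iff_eq_take, ← List.map_take, List.take_range,
    List.length_map, List.length_range,
    min_eq_left (colCount_mono i h.length_le)]
  apply List.map_congr_left
  intro x hx
  rw [List.mem_range] at hx
  have hp : Nat.pair i x < σ'.length := (lt_colCount_iff i _ x).mp hx
  rw [List.getD_eq_getElem _ _ hp, List.getD_eq_getElem _ _ (hp.trans_le h.length_le)]
  exact h.getElem hp

theorem colPrefix_map_range (i n : ℕ) (X : ℕ → Bool) :
    colPrefix i ((List.range n).map X) = (List.range (colCount i n)).map fun x => X (Nat.pair i x) := by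
  rw [colPrefix_eq, List.length_map, List.length_range]
  apply List.map_congr_left
  intro x hx
  rw [List.mem_range] at hx
  have hp : Nat.pair i x < n := (lt_colCount_iff i n x).mp hx
  rw [List.getD_eq_getElem _ _ (by simpa using hp)]
  simp

theorem sum_colCount (n : ℕ) : ∑ i ∈ Finset.range n, colCount i n = n := by
  classical
  have : ∀ i, colCount i n = ((Finset.range n).filter fun p => p.unpair.1 = i).card := fun _ => rfl
  simp_rw [this]
  conv_rhs => rw [← Finset.card_range n]
  exact (Finset.card_eq_sum_card_fiberwise (f := fun p => (Nat.unpair p).1)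
    (t := Finset.range n) (fun p hp => by
    simp only [Finset.coe_range, Set.mem_Iio] at hp ⊢
    exact lt_of_le_of_lt (Nat.unpair_left_le p) hp)).symm

theorem getD_from_colPrefix (i x : ℕ) (σ : List Bool) (h : Nat.pair i x < σ.length) :
    (colPrefix i σ).getD x false = σ.getD (Nat.pair i x) false := by
  rw [colPrefix_eq]
  have hx : x < colCount i σ.length := (lt_colCount_iff i _ x).mpr h
  rw [List.getD_eq_getElem _ _ (by simpa using hx)]
  simp

theorem measurable_binDigits : Measurable binDigits := by
  refine measurable_pi_lambda _ fun n => ?_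
  apply Measurable.comp (measurable_from_top (f := fun z : ℤ => decide (z % 2 = 1)))
  exact (Int.measurable_floor.comp (measurable_id.mul_const _))

/-- digits from nat floor -/

theorem binDigits_eq_testBit {x : ℝ} (hx : 0 ≤ x) {k n : ℕ} (hk : k < n) :
    binDigits x k = Nat.testBit ⌊x * 2 ^ n⌋₊ (n - 1 - k) := by
  have h2 : (0:ℝ) < 2 ^ (k+1) := by positivity
  have hfl : ⌊x * 2 ^ (k+1)⌋ = (⌊x * 2 ^ (k+1)⌋₊ : ℤ) :=
    (Int.natCast_floor_eq_floor (by positivity)).symm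
  have hsplit : x * 2 ^ (k+1) = (x * 2 ^ n) / ((2:ℝ) ^ (n-1-k)) := by
    rw [eq_div_iff (by positivity)]
    rw [mul_assoc, ← pow_add]
    congr 2
    omega
  have hdiv : ⌊x * 2 ^ (k+1)⌋₊ = ⌊x * 2 ^ n⌋₊ / 2 ^ (n-1-k) := by
    rw [hsplit, ← Nat.floor_div_natCast (x * 2^n) (2^(n-1-k))]
    norm_num
  rw [binDigits, Nat.testBit_eq_decide_div_mod_eq, ← hdiv, hfl]
  have : ((⌊x * 2 ^ (k+1)⌋₊ : ℤ) % 2 = 1) ↔ (⌊x * 2 ^ (k+1)⌋₊ % 2 = 1) := by omega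
  simp [this]

def patList (n m : ℕ) : List Bool := (List.range n).map fun k => m.testBit (n - 1 - k)

theorem patList_length (n m : ℕ) : (patList n m).length = n := by simp [patList]

theorem patList_injOn {n m m' : ℕ} (hm : m < 2 ^ n) (hm' : m' < 2 ^ n)
    (h : patList n m = patList n m') : m = m' := by
  apply Nat.eq_of_testBit_eq
  intro e
  rcases lt_or_ge e n with he | he
  · have hk : n - 1 - (n - 1 - e) = e := by omega
    have hkn : n - 1 - e < n := by omega
    have := congrArg (fun l => l.getD (n - 1 - e) false) h
    simpa [patList, List.getD_eq_getElem, hkn, hk] using this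
  · rw [Nat.testBit_lt_two_pow (lt_of_lt_of_le hm (Nat.pow_le_pow_right (by norm_num) he)),
      Nat.testBit_lt_two_pow (lt_of_lt_of_le hm' (Nat.pow_le_pow_right (by norm_num) he))]

theorem patList_surj (l : List Bool) : ∃ m < 2 ^ l.length, patList l.length m = l := by
  induction l with
  | nil => exact ⟨0, by norm_num, rfl⟩
  | cons b t ih =>
    obtain ⟨m', hm', hp⟩ := ih
    refine ⟨2 ^ t.length * b.toNat + m', ?_, ?_⟩
    · have : b.toNat ≤ 1 := Bool.toNat_le b
      calc 2 ^ t.length * b.toNat + m' < 2 ^ t.length * b.toNat + 2 ^ t.length := by omega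
        _ ≤ 2 ^ (t.length + 1) := by rw [pow_succ]; nlinarith [pow_pos (by norm_num : (0:ℕ) < 2) t.length]
    · have htb : ∀ j, (2 ^ t.length * b.toNat + m').testBit j
          = if j < t.length then m'.testBit j else b.toNat.testBit (j - t.length) :=
        Nat.testBit_two_pow_mul_add b.toNat hm'
    -- now compute patList
      apply List.ext_getElem (by simp [patList])
      intro k hk1 hk2
      simp only [patList, List.getElem_map, List.getElem_range, List.length_map,
        List.length_range] at hk1 ⊢
      simp only [List.length_cons] at hk1 hk2 ⊢
      rcases Nat.eq_zero_or_pos k with rfl | hkpos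
      · have : t.length + 1 - 1 - 0 = t.length := by omega
        rw [this, htb, if_neg (by omega)]
        simp only [Nat.sub_self]
        cases b <;> simp
      · have hklen : k < t.length + 1 := hk1
        have he : t.length + 1 - 1 - k = t.length - 1 - (k - 1) := by omega
        have he2 : t.length - 1 - (k-1) < t.length := by omega
        rw [he, htb, if_pos he2]
        have := congrArg (fun l : List Bool => l.getD (k-1) false) hp
        simp only [patList, List.getD_eq_getElem?_getD] at this
        have hlt : k - 1 < t.length := by omega
        rw [List.getElem?_map] at this
        simp only [List.getElem?_range hlt] at this
        have : Nat.testBit m' (t.length - 1 - (k-1)) = t.getD (k-1) false := by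
          simpa using this
        rw [this]
        show _ = (b :: t)[k]
        have : (b :: t)[k] = t[k-1] := by
          rcases Nat.exists_eq_add_of_lt hkpos with ⟨j, rfl⟩
          simp [Nat.add_comm]
        rw [this, List.getD_eq_getElem _ _ hlt]

theorem binDigits_prefix {x : ℝ} (hx : x ∈ Set.Ico (0:ℝ) 1) (n : ℕ) :
    (List.range n).map (binDigits x) = patList n ⌊x * 2^n⌋₊ := by
  apply List.ext_getElem (by simp [patList])
  intro k hk1 hk2
  simp only [List.length_map, List.length_range] at hk1
  simp only [List.getElem_map, List.getElem_range, patList]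
  exact binDigits_eq_testBit hx.1 hk1

theorem floor_lt_pow {x : ℝ} (hx : x ∈ Set.Ico (0:ℝ) 1) (n : ℕ) : ⌊x * 2^n⌋₊ < 2^n := by
  rw [Nat.floor_lt (mul_nonneg hx.1 (by positivity))]
  push_cast
  nlinarith [hx.1, hx.2, pow_pos (by norm_num : (0:ℝ) < 2) n]

theorem mem_dyadic_iff {n m : ℕ} (hm : m < 2^n) (x : ℝ) :
    x ∈ Set.Ico ((m:ℝ)/2^n) ((m+1)/2^n) ↔ x ∈ Set.Ico (0:ℝ) 1 ∧ ⌊x * 2^n⌋₊ = m := by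
  have h2 : (0:ℝ) < 2^n := by positivity
  have hm' : (m:ℝ) + 1 ≤ 2^n := by
    have : (m:ℝ) + 1 ≤ ((2:ℕ)^n : ℕ) := by exact_mod_cast hm
    simpa using this
  constructor
  · rintro ⟨h1, h2'⟩
    have hx0 : 0 ≤ x := le_trans (by positivity) h1
    have hx1 : x < 1 := lt_of_lt_of_le h2' (by rw [div_le_one h2]; exact hm')
    refine ⟨⟨hx0, hx1⟩, ?_⟩
    rw [Nat.floor_eq_iff (mul_nonneg hx0 (le_of_lt h2))]
    constructor
    · calc (m:ℝ) = (m/2^n) * 2^n := by field_simp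
        _ ≤ x * 2^n := by apply mul_le_mul_of_nonneg_right h1 (le_of_lt h2)
    · calc x * 2^n < ((m+1)/2^n) * 2^n := by apply mul_lt_mul_of_pos_right h2' h2
        _ = (m:ℝ) + 1 := by field_simp
  · rintro ⟨⟨hx0, hx1⟩, hfl⟩
    rw [Nat.floor_eq_iff (mul_nonneg hx0 (le_of_lt h2))] at hfl
    constructor
    · rw [div_le_iff₀ h2]; exact hfl.1
    · rw [lt_div_iff₀ h2]; exact hfl.2

def levelSet (n : ℕ) (W : Set (List Bool)) : Set (ℕ → Bool) :=
  {X | (List.range n).map X ∈ W}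

theorem measurableSet_fixedPrefix (n : ℕ) (l : List Bool) :
    MeasurableSet {X : ℕ → Bool | (List.range n).map X = l} := by
  by_cases h : l.length = n
  · have : {X : ℕ → Bool | (List.range n).map X = l}
        = ⋂ k ∈ Finset.range n, {X : ℕ → Bool | X k = l.getD k false} := by
      ext X
      simp only [Set.mem_setOf_eq, Set.mem_iInter, Finset.mem_range]
      constructor
      · intro hX k hk
        have := congrArg (fun t : List Bool => t.getD k false) hX
        simpa [List.getD_eq_getElem, hk, List.getD_eq_getElem _ _ (h ▸ hk)] using this
      · intro hX
        apply List.ext_getElem (by simp [h])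
        intro k hk1 hk2
        simp only [List.length_map, List.length_range] at hk1
        simp only [List.getElem_map, List.getElem_range]
        rw [← List.getD_eq_getElem _ _ hk2]
        exact hX k hk1
    rw [this]
    exact MeasurableSet.biInter (Set.to_countable _)
      (fun k _ => (measurable_pi_apply k) (MeasurableSet.singleton _))
  · have : {X : ℕ → Bool | (List.range n).map X = l} = ∅ := by
      ext X
      simp only [Set.mem_setOf_eq, Set.mem_empty_iff_false, iff_false]
      intro hX
      apply h
      rw [← hX]; simp
    rw [this]; exact MeasurableSet.empty

open Classical in

noncomputable def levelFinset (n : ℕ) (W : Set (List Bool)) : Finset ℕ :=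
  (Finset.range (2^n)).filter fun m => patList n m ∈ W

theorem levelSet_eq_biUnion (n : ℕ) (W : Set (List Bool)) :
    levelSet n W = ⋃ m ∈ levelFinset n W, {X : ℕ → Bool | (List.range n).map X = patList n m} := by
  classical
  ext X
  simp only [levelSet, Set.mem_setOf_eq, Set.mem_iUnion, levelFinset, Finset.mem_filter,
    Finset.mem_range, exists_prop]
  constructor
  · intro hX
    obtain ⟨m, hm, hpm⟩ := patList_surj ((List.range n).map X)
    simp only [List.length_map, List.length_range] at hm hpm
    exact ⟨m, ⟨hm, by rw [hpm]; exact hX⟩, hpm.symm⟩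
  · rintro ⟨m, ⟨_, hmW⟩, hX⟩
    rw [hX]; exact hmW

theorem measurableSet_levelSet (n : ℕ) (W : Set (List Bool)) :
    MeasurableSet (levelSet n W) := by
  rw [levelSet_eq_biUnion]
  exact (levelFinset n W).measurableSet_biUnion fun m _ => measurableSet_fixedPrefix n _

theorem preimage_levelSet (n : ℕ) (W : Set (List Bool)) :
    binDigits ⁻¹' (levelSet n W) ∩ Set.Ico (0:ℝ) 1
      = ⋃ m ∈ levelFinset n W, Set.Ico ((m:ℝ)/2^n) ((m+1)/2^n) := by
  classical
  ext x
  simp only [Set.mem_inter_iff, Set.mem_preimage, levelSet, Set.mem_setOf_eq, Set.mem_iUnion,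
    levelFinset, Finset.mem_filter, Finset.mem_range, exists_prop]
  constructor
  · rintro ⟨hW, hx⟩
    refine ⟨⌊x * 2^n⌋₊, ⟨floor_lt_pow hx n, ?_⟩, ?_⟩
    · rw [← binDigits_prefix hx n]; exact hW
    · exact (mem_dyadic_iff (floor_lt_pow hx n) x).mpr ⟨hx, rfl⟩
  · rintro ⟨m, ⟨hm, hmW⟩, hxm⟩
    obtain ⟨hx, hfl⟩ := (mem_dyadic_iff hm x).mp hxm
    refine ⟨?_, hx⟩
    rw [binDigits_prefix hx n, hfl]
    exact hmW

theorem volume_dyadic (n m : ℕ) :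
    volume (Set.Ico ((m:ℝ)/2^n) ((m+1)/2^n)) = (2⁻¹ : ENNReal)^n := by
  rw [Real.volume_Ico]
  have h2 : (0:ℝ) < 2^n := by positivity
  have : ((m:ℝ)+1)/2^n - (m:ℝ)/2^n = (2^n)⁻¹ := by field_simp; ring
  rw [this, ENNReal.ofReal_inv_of_pos h2, ENNReal.ofReal_pow (by norm_num), ← ENNReal.inv_pow]
  norm_num

theorem cantorMeasure_levelSet (n : ℕ) (W : Set (List Bool)) :
    cantorMeasure (levelSet n W) = (levelFinset n W).card * (2⁻¹ : ENNReal)^n := by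
  rw [cantorMeasure, Measure.map_apply measurable_binDigits (measurableSet_levelSet n W),
    Measure.restrict_apply (measurable_binDigits (measurableSet_levelSet n W)),
    preimage_levelSet]
  rw [measure_biUnion_finset ?hd (fun m _ => measurableSet_Ico)]
  · rw [Finset.sum_congr rfl (fun m _ => volume_dyadic n m), Finset.sum_const, nsmul_eq_mul]
  case hd =>
    intro a ha b hb hab
    simp only [Function.onFun]
    rw [Set.Ico_disjoint_Ico]
    have h2 : (0:ℝ) < 2^n := by positivity
    rcases lt_or_gt_of_ne hab with h | h
    · apply le_trans (min_le_left _ _)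
      apply le_max_of_le_right
      gcongr
      exact_mod_cast h
    · apply le_trans (min_le_right _ _)
      apply le_max_of_le_left
      gcongr
      exact_mod_cast h

theorem cantorMeasure_levelSet_card (n : ℕ) (W : Set (List Bool)) :
    cantorMeasure (levelSet n W)
      = (Nat.card {l : List Bool // l.length = n ∧ l ∈ W}) * (2⁻¹ : ENNReal)^n := by
  classical
  rw [cantorMeasure_levelSet]
  congr 1
  rw [← Nat.card_eq_finsetCard (levelFinset n W)]
  norm_cast
  apply Nat.card_eq_of_bijective (fun m => ⟨patList n m.1, by
    have := m.2
    simp only [levelFinset, Finset.mem_filter, Finset.mem_range] at this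
    exact ⟨patList_length n m.1, this.2⟩⟩)
  constructor
  · rintro ⟨m, hm⟩ ⟨m', hm'⟩ h
    simp only [levelFinset, Finset.mem_filter, Finset.mem_range] at hm hm'
    simp only [Subtype.mk.injEq] at h ⊢
    exact patList_injOn hm.1 hm'.1 h
  · rintro ⟨l, hlen, hlW⟩
    obtain ⟨m, hm, hpm⟩ := patList_surj l
    rw [hlen] at hm hpm
    refine ⟨⟨m, ?_⟩, by simp [hpm]⟩
    simp only [levelFinset, Finset.mem_filter, Finset.mem_range]
    exact ⟨hm, by rw [hpm]; exact hlW⟩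

def lenEquiv (n : ℕ) : {l : List Bool // l.length = n} ≃ (Fin n → Bool) where
  toFun l k := l.1.getD k false
  invFun f := ⟨List.ofFn f, by simp⟩
  left_inv := by
    rintro ⟨l, rfl⟩
    ext1
    apply List.ext_getElem (by simp)
    intro k hk1 hk2
    simp [List.getD_eq_getElem _ _ hk2]
  right_inv := by
    intro f
    funext k
    simp [List.getD_eq_getElem, k.2]

instance fintypeLen (n : ℕ) : Finite {l : List Bool // l.length = n} :=
  Finite.of_equiv _ (lenEquiv n).symm

theorem card_len (n : ℕ) : Nat.card {l : List Bool // l.length = n} = 2 ^ n := by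
  rw [Nat.card_congr (lenEquiv n)]
  simp [Nat.card_eq_fintype_card]

noncomputable def colMap (n : ℕ) (σ : {l : List Bool // l.length = n}) :
    ∀ i : Fin n, {t : List Bool // t.length = colCount i n} :=
  fun i => ⟨colPrefix i σ.1, by rw [length_colPrefix, σ.2]⟩

theorem colMap_bijective (n : ℕ) : Function.Bijective (colMap n) := by
  rw [Nat.bijective_iff_injective_and_card]
  constructor
  · rintro ⟨σ, hσ⟩ ⟨σ', hσ'⟩ h
    simp only [Subtype.mk.injEq]
    apply List.ext_getElem (by rw [hσ, hσ'])
    intro p hp1 hp2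
    rw [hσ] at hp1
    set i := p.unpair.1 with hi
    have hin : i < n := lt_of_le_of_lt (Nat.unpair_left_le p) hp1
    have hpair : Nat.pair i p.unpair.2 = p := Nat.pair_unpair p
    have hc := congrArg (fun f => (f ⟨i, hin⟩).1.getD p.unpair.2 false) h
    simp only [colMap] at hc
    rw [getD_from_colPrefix i _ _ (by rw [hpair, hσ]; exact hp1),
      getD_from_colPrefix i _ _ (by rw [hpair, hσ']; exact hp1), hpair] at hc
    rwa [List.getD_eq_getElem _ _ (by rw [hσ]; exact hp1), List.getD_eq_getElem _ _ (by rw [hσ']; exact hp1)] at hc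
  · rw [card_len, Nat.card_pi]
    have : ∀ i : Fin n, Nat.card {t : List Bool // t.length = colCount i n} = 2 ^ colCount i n :=
      fun i => card_len _
    rw [Finset.prod_congr rfl (fun i _ => this i), Finset.prod_pow_eq_pow_sum]
    have hs : ∑ i : Fin n, colCount i n = n := by
      rw [Fin.sum_univ_eq_sum_range (fun i => colCount i n)]; exact sum_colCount n
    rw [hs]

theorem card_interleave (T : ℕ → Set (List Bool)) (hnil : ∀ i, [] ∈ T i) (n : ℕ) :
    Nat.card {σ : List Bool // σ.length = n ∧ σ ∈ interleaveTree T}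
      = ∏ i ∈ Finset.range n, Nat.card {τ : List Bool // τ.length = colCount i n ∧ τ ∈ T i} := by
  classical
  have e1 : {σ : List Bool // σ.length = n ∧ σ ∈ interleaveTree T}
      ≃ {s : {l : List Bool // l.length = n} // s.1 ∈ interleaveTree T} :=
    (Equiv.subtypeSubtypeEquivSubtypeInter _ _).symm
  have key : ∀ s : {l : List Bool // l.length = n},
      s.1 ∈ interleaveTree T ↔ ∀ i : Fin n, (colMap n s i).1 ∈ T i.1 := by
    rintro ⟨σ, hσ⟩
    constructor
    · intro hs i
      exact hs i
    · intro hs i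
      rcases lt_or_ge i n with hin | hin
      · exact hs ⟨i, hin⟩
      · have : colPrefix i σ = [] := by
          rw [← List.length_eq_zero_iff, length_colPrefix, hσ]
          exact colCount_eq_zero i n hin
        rw [this]
        exact hnil i
  have e2 : {s : {l : List Bool // l.length = n} // s.1 ∈ interleaveTree T}
      ≃ {f : ∀ i : Fin n, {t : List Bool // t.length = colCount i n} // ∀ i : Fin n, (f i).1 ∈ T i.1} :=
    (Equiv.ofBijective (colMap n) (colMap_bijective n)).subtypeEquiv key
  have e3 : {f : ∀ i : Fin n, {t : List Bool // t.length = colCount i n} // ∀ i : Fin n, (f i).1 ∈ T i.1}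
      ≃ ∀ i : Fin n, {t : {t : List Bool // t.length = colCount i n} // t.1 ∈ T i.1} :=
    Equiv.subtypePiEquivPi (p := fun (i : Fin n) (t : {t : List Bool // t.length = colCount i n}) => t.1 ∈ T i.1)
  have e4 : ∀ i : Fin n, {t : {t : List Bool // t.length = colCount i n} // t.1 ∈ T i.1}
      ≃ {τ : List Bool // τ.length = colCount i n ∧ τ ∈ T i} :=
    fun i => Equiv.subtypeSubtypeEquivSubtypeInter _ _
  rw [Nat.card_congr ((e1.trans e2).trans (e3.trans (Equiv.piCongrRight e4))), Nat.card_pi,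
    Fin.prod_univ_eq_prod_range (fun i => Nat.card { τ : List Bool // τ.length = colCount i n ∧ τ ∈ T i })]

theorem prod_subset_le_one {f : ℕ → ENNReal} (hf : ∀ i, f i ≤ 1) {s t : Finset ℕ} (h : s ⊆ t) :
    ∏ i ∈ t, f i ≤ ∏ i ∈ s, f i := by
  classical
  rw [← Finset.prod_sdiff h]
  calc (∏ i ∈ t \ s, f i) * ∏ i ∈ s, f i ≤ 1 * ∏ i ∈ s, f i := by
        exact mul_le_mul_left (Finset.prod_le_one (fun i _ => zero_le) (fun i _ => hf i)) _
    _ = ∏ i ∈ s, f i := one_mul _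

theorem hasProd_le_one {f : ℕ → ENNReal} (hf : ∀ i, f i ≤ 1) :
    HasProd f (⨅ s : Finset ℕ, ∏ i ∈ s, f i) := by
  have hanti : Antitone (fun s : Finset ℕ => ∏ i ∈ s, f i) := by
    intro s t hst
    exact prod_subset_le_one hf hst
  exact tendsto_atTop_iInf hanti

theorem tprod_eq_iInf_range {f : ℕ → ENNReal} (hf : ∀ i, f i ≤ 1) :
    ∏' i, f i = ⨅ n, ∏ i ∈ Finset.range n, f i := by
  rw [(hasProd_le_one hf).tprod_eq]
  apply le_antisymm
  · exact le_iInf fun n => iInf_le _ (Finset.range n)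
  · refine le_iInf fun s => ?_
    obtain ⟨n, hn⟩ := s.exists_nat_subset_range
    exact le_trans (iInf_le _ n) (prod_subset_le_one hf hn)

theorem tprod_mono_le_one {f g : ℕ → ENNReal} (hf : ∀ i, f i ≤ g i) (hg : ∀ i, g i ≤ 1) :
    ∏' i, f i ≤ ∏' i, g i := by
  rw [tprod_eq_iInf_range (fun i => (hf i).trans (hg i)), tprod_eq_iInf_range hg]
  exact le_iInf fun n => le_trans (iInf_le _ n) (Finset.prod_le_prod' fun i _ => hf i)

theorem iInf_prod_antitone {m : ℕ} (a : ℕ → ℕ → ENNReal)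
    (hanti : ∀ i, Antitone (a i)) (hle : ∀ i k, a i k ≤ 1) :
    ⨅ k, ∏ i ∈ Finset.range m, a i k = ∏ i ∈ Finset.range m, (⨅ k, a i k) := by
  have hLle : ∀ i, (⨅ k, a i k) ≤ 1 := fun i => le_trans (iInf_le _ 0) (hle i 0)
  have htend : Tendsto (fun k => ∏ i ∈ Finset.range m, a i k) atTop
      (𝓝 (∏ i ∈ Finset.range m, (⨅ k, a i k))) := by
    induction m with
    | zero => simpa using tendsto_const_nhds
    | succ m ih =>
      simp only [Finset.prod_range_succ]
      apply ENNReal.Tendsto.mul ih ?_ (tendsto_atTop_iInf (hanti m)) ?_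
      · right
        exact ne_top_of_le_ne_top ENNReal.one_ne_top (hLle m)
      · right
        exact ne_top_of_le_ne_top ENNReal.one_ne_top
          (Finset.prod_le_one (fun i _ => zero_le) (fun i _ => hLle i))
  have hanti2 : Antitone (fun k => ∏ i ∈ Finset.range m, a i k) := by
    intro k k' hkk'
    exact Finset.prod_le_prod' fun i _ => hanti i hkk'
  exact tendsto_nhds_unique (tendsto_atTop_iInf hanti2) htend

end Aux

section Aux2
open Filter Topology

theorem pathSet_eq_iInter (W : Set (List Bool)) : pathSet W = ⋂ n, levelSet n W := by
  ext X; simp [pathSet, levelSet]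

theorem levelSet_antitone {W : Set (List Bool)} (hW : IsTree W) :
    Antitone fun n => levelSet n W := by
  intro m n hmn X hX
  simp only [levelSet, Set.mem_setOf_eq] at hX ⊢
  apply hW _ hX
  rw [List.prefix_iff_eq_take, ← List.map_take, List.take_range, List.length_map,
    List.length_range, min_eq_left hmn]

instance : IsProbabilityMeasure cantorMeasure := by
  constructor
  rw [cantorMeasure, Measure.map_apply measurable_binDigits MeasurableSet.univ,
    Set.preimage_univ, Measure.restrict_apply MeasurableSet.univ, Set.univ_inter,
    Real.volume_Ico]
  norm_num

theorem measure_pathSet_eq_iInf {W : Set (List Bool)} (hW : IsTree W) :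
    cantorMeasure (pathSet W) = ⨅ n, cantorMeasure (levelSet n W) := by
  rw [pathSet_eq_iInter]
  have h1 : Tendsto (fun n => cantorMeasure (levelSet n W)) atTop
      (𝓝 (cantorMeasure (⋂ n, levelSet n W))) := by
    apply tendsto_measure_iInter_atTop
      (fun n => (measurableSet_levelSet n W).nullMeasurableSet) (levelSet_antitone hW)
    exact ⟨0, ne_top_of_le_ne_top ENNReal.one_ne_top prob_le_one⟩
  have h2 : Antitone fun n => cantorMeasure (levelSet n W) :=
    fun m n hmn => measure_mono (levelSet_antitone hW hmn)
  exact tendsto_nhds_unique h1 (tendsto_atTop_iInf h2)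

theorem isTree_interleave {T : ℕ → Set (List Bool)} (hT : ∀ i, IsTree (T i)) :
    IsTree (interleaveTree T) := by
  intro l hl l' hl' i
  exact hT i _ (hl i) _ (colPrefix_mono hl' i)

theorem levelSet_interleave_prod (T : ℕ → Set (List Bool)) (hnil : ∀ i, [] ∈ T i) (n : ℕ) :
    cantorMeasure (levelSet n (interleaveTree T))
      = ∏ i ∈ Finset.range n, cantorMeasure (levelSet (colCount i n) (T i)) := by
  rw [cantorMeasure_levelSet_card, card_interleave T hnil n]
  rw [Finset.prod_congr rfl (fun i _ => cantorMeasure_levelSet_card (colCount i n) (T i)),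
    Finset.prod_mul_distrib, Finset.prod_pow_eq_pow_sum, sum_colCount]
  push_cast
  rfl

end Aux2
/-- Let `⟨Tᵢ⟩` be trees with `μ([Tᵢ]) ≥ qᵢ`, where `0 < qᵢ ≤ 1` and `∏ᵢ qᵢ ≥ r > 0`,
and let `S` be the interleaving tree.  Then `μ([S]) = ∏ᵢ μ([Tᵢ]) ≥ r > 0`, and every
path `B` of `S` continuously determines the sequence of its columns, each of which
is a path through the corresponding `Tᵢ`. -/
theorem stmt9 (T : ℕ → Set (List Bool)) (hT : ∀ i, IsTree (T i))
    (q : ℕ → ENNReal) (r : ENNReal)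
    (hq0 : ∀ i, 0 < q i) (hq1 : ∀ i, q i ≤ 1)
    (hTq : ∀ i, q i ≤ cantorMeasure (pathSet (T i)))
    (hr : 0 < r) (hqr : r ≤ ∏' i, q i) :
    cantorMeasure (pathSet (interleaveTree T)) = (∏' i, cantorMeasure (pathSet (T i))) ∧
    r ≤ cantorMeasure (pathSet (interleaveTree T)) ∧
    Continuous (fun (B : ℕ → Bool) (i x : ℕ) => B (Nat.pair i x)) ∧
    ∀ B ∈ pathSet (interleaveTree T), ∀ i,
      (fun x => B (Nat.pair i x)) ∈ pathSet (T i) := by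
  classical
  have hnil : ∀ i, [] ∈ T i := by
    intro i
    have hpos : 0 < cantorMeasure (pathSet (T i)) := lt_of_lt_of_le (hq0 i) (hTq i)
    have hne : (pathSet (T i)).Nonempty := by
      by_contra h
      rw [Set.not_nonempty_iff_eq_empty] at h
      rw [h, measure_empty] at hpos
      exact lt_irrefl _ hpos
    obtain ⟨X, hX⟩ := hne
    simpa using hX 0
  set a : ℕ → ℕ → ENNReal := fun i k => cantorMeasure (levelSet k (T i)) with ha
  have haanti : ∀ i, Antitone (a i) :=
    fun i m n hmn => measure_mono (levelSet_antitone (hT i) hmn)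
  have hale : ∀ i k, a i k ≤ 1 := fun i k => prob_le_one
  have hL : ∀ i, cantorMeasure (pathSet (T i)) = ⨅ k, a i k :=
    fun i => measure_pathSet_eq_iInf (hT i)
  have hLle : ∀ i, cantorMeasure (pathSet (T i)) ≤ 1 := fun i => prob_le_one
  have hmain : cantorMeasure (pathSet (interleaveTree T))
      = ∏' i, cantorMeasure (pathSet (T i)) := by
    rw [measure_pathSet_eq_iInf (isTree_interleave hT)]
    have hlev : ∀ n, cantorMeasure (levelSet n (interleaveTree T))
        = ∏ i ∈ Finset.range n, a i (colCount i n) :=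
      fun n => levelSet_interleave_prod T hnil n
    simp_rw [hlev]
    rw [tprod_eq_iInf_range hLle]
    apply le_antisymm
    · apply le_iInf; intro m
      have hprodm : ∏ i ∈ Finset.range m, cantorMeasure (pathSet (T i))
          = ⨅ k, ∏ i ∈ Finset.range m, a i k := by
        rw [Finset.prod_congr rfl (fun i _ => hL i)]
        exact (iInf_prod_antitone a haanti hale).symm
      rw [hprodm]
      apply le_iInf; intro k
      set N := m + (Finset.range m).sup (fun i => Nat.pair i k + 1) with hN
      apply le_trans (iInf_le _ N)
      have hsub : Finset.range m ⊆ Finset.range N := Finset.range_subset_range.mpr (by omega)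
      apply le_trans (prod_subset_le_one (fun i => hale i _) hsub)
      apply Finset.prod_le_prod'
      intro i hi
      apply haanti i
      have hpair : Nat.pair i k + 1 ≤ (Finset.range m).sup (fun i => Nat.pair i k + 1) :=
        Finset.le_sup (f := fun i => Nat.pair i k + 1) hi
      have hk : k < colCount i N := (lt_colCount_iff i N k).mpr (by omega)
      omega
    · apply le_iInf; intro n
      apply le_trans (iInf_le _ n)
      apply Finset.prod_le_prod'
      intro i _
      rw [hL i]
      exact iInf_le _ _
  refine ⟨hmain, ?_, ?_, ?_⟩
  · rw [hmain]
    exact le_trans hqr (tprod_mono_le_one hTq hLle)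
  · exact continuous_pi fun i => continuous_pi fun x => continuous_apply _
  · intro B hB i k
    have hcol := hB (Nat.pair i k + 1) i
    apply hT i _ hcol
    rw [colPrefix_map_range]
    have hk : k < colCount i (Nat.pair i k + 1) :=
      (lt_colCount_iff _ _ _).mpr (Nat.lt_succ_self _)
    rw [List.prefix_iff_eq_take, ← List.map_take, List.take_range, List.length_map,
      List.length_range, min_eq_left (le_of_lt hk)]
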